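/- arXiv:2002.04190 — 4 statements merged into one kernel-verified Lean document; each statement's English description precedes it below -/
import Mathlib

section
/- Let A_i = {n ∈ ℕ : n = k² + (i−1) for some k ∈ ℕ} \ (A_1 ∪ ⋯ ∪ A_{i−1}) (so A_1 = perfect squares, etc.), which partitions ℕ, and define q_n = i for n ∈ A_i. Then (q_n) has the d-splitting property but not the splitting property. -/
open Filter Topology Set

/-- Upper natural density of a set of naturals. -/
noncomputable def upperDensity (A : Set ℕ) : ℝ :=
  Filter.limsup (fun n => (Nat.card ↥(A ∩ Set.Iio n) : ℝ) / n) Filter.atTop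

/-- `A` has natural density `δ`. -/
def HasDensity (A : Set ℕ) (δ : ℝ) : Prop :=
  Filter.Tendsto (fun n => (Nat.card ↥(A ∩ Set.Iio n) : ℝ) / n) Filter.atTop (nhds δ)

/-- Statistical convergence of a real sequence. -/
def StatTendsto (x : ℕ → ℝ) (ξ : ℝ) : Prop :=
  ∀ ε : ℝ, 0 < ε → HasDensity {n | ε ≤ |x n - ξ|} 0

/-- The `d`-splitting property of a sequence `(q n)` of naturals. -/
def HasDSplitting (q : ℕ → ℕ) : Prop :=
  ∃ B D : Set ℕ, B ∪ D = Set.univ ∧ Disjoint B D ∧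
    (B = ∅ ∨ 0 < upperDensity B) ∧ (D = ∅ ∨ 0 < upperDensity D) ∧
    (0 < upperDensity B →
      ∃ B' : Set ℕ, HasDensity (symmDiff B B') 0 ∧ ∃ M, ∀ n ∈ B', q n ≤ M) ∧
    (0 < upperDensity D →
      ∃ D' : Set ℕ, HasDensity (symmDiff D D') 0 ∧
        Filter.Tendsto q (Filter.atTop ⊓ Filter.principal D') Filter.atTop)

/-- The splitting property of a sequence `(q n)` of naturals. -/
def HasSplitting (q : ℕ → ℕ) : Prop :=
  ∃ B I : Set ℕ, B ∪ I = Set.univ ∧ Disjoint B I ∧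
    (B = ∅ ∨ B.Infinite) ∧ (I = ∅ ∨ I.Infinite) ∧
    (B.Infinite → ∃ M, ∀ n ∈ B, q n ≤ M) ∧
    (I.Infinite → Filter.Tendsto q (Filter.atTop ⊓ Filter.principal I) Filter.atTop)

theorem q_formula (A : ℕ → Set ℕ)
    (hA : ∀ i, 1 ≤ i →
      A i = {n | 1 ≤ n ∧ ∃ k, 1 ≤ k ∧ n = k ^ 2 + (i - 1)} \ ⋃ j ∈ Finset.Ico 1 i, A j)
    (q : ℕ → ℕ) (hq : ∀ i, 1 ≤ i → ∀ n ∈ A i, q n = i)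
    (n : ℕ) (hn : 1 ≤ n) : q n = n - (Nat.sqrt n)^2 + 1 := by
  set k := Nat.sqrt n with hk
  have h1 : k ^ 2 ≤ n := Nat.sqrt_le' n
  have h2 : n < (k + 1) ^ 2 := Nat.lt_succ_sqrt' n
  have hk1 : 1 ≤ k := Nat.sqrt_pos.mpr hn
  set i := n - k ^ 2 + 1 with hi
  have hi1 : 1 ≤ i := by omega
  have hmem : n ∈ A i := by
    rw [hA i hi1]
    refine ⟨⟨hn, k, hk1, by omega⟩, ?_⟩
    simp only [Set.mem_iUnion, not_exists]
    intro j hj hnj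
    rw [Finset.mem_Ico] at hj
    rw [hA j hj.1] at hnj
    obtain ⟨⟨-, k', hk', hnk'⟩, -⟩ := hnj
    have hkk : k < k' := by
      by_contra h
      push_neg at h
      have : k' ^ 2 ≤ k ^ 2 := Nat.pow_le_pow_left h 2
      omega
    have : (k + 1) ^ 2 ≤ k' ^ 2 := Nat.pow_le_pow_left hkk 2
    omega
  exact hq i hi1 n hmem

theorem q_val (A : ℕ → Set ℕ)
    (hA : ∀ i, 1 ≤ i →
      A i = {n | 1 ≤ n ∧ ∃ k, 1 ≤ k ∧ n = k ^ 2 + (i - 1)} \ ⋃ j ∈ Finset.Ico 1 i, A j)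
    (q : ℕ → ℕ) (hq : ∀ i, 1 ≤ i → ∀ n ∈ A i, q n = i)
    (m k : ℕ) (hm : 1 ≤ m) (hmk : m ≤ k) : q (k ^ 2 + m - 1) = m := by
  set n := k ^ 2 + m - 1 with hn
  have hk1 : 1 ≤ k := le_trans hm hmk
  have hkk : 1 ≤ k ^ 2 := Nat.one_le_pow _ _ hk1
  have h1 : 1 ≤ n := by omega
  have hs : Nat.sqrt n = k := by
    have hle : k ≤ Nat.sqrt n := Nat.le_sqrt'.mpr (by omega)
    have hlt : Nat.sqrt n < k + 1 := by
      rw [Nat.sqrt_lt']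
      have : (k + 1) ^ 2 = k ^ 2 + 2 * k + 1 := by ring
      omega
    omega
  rw [q_formula A hA q hq n h1, hs]
  omega

theorem not_split (q : ℕ → ℕ)
    (q_val : ∀ m k : ℕ, 1 ≤ m → m ≤ k → q (k ^ 2 + m - 1) = m) : ¬ HasSplitting q := by
  rintro ⟨B, I, hU, hDisj, hB, hI, hBbd, hItend⟩
  have hmem : ∀ n : ℕ, n ∈ B ∨ n ∈ I := fun n => by
    have : n ∈ B ∪ I := hU.symm ▸ Set.mem_univ n
    exact this
  obtain ⟨M, hM⟩ : ∃ M, ∀ n ∈ B, q n ≤ M := by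
    rcases hB with h | h
    · exact ⟨0, by simp [h]⟩
    · exact hBbd h
  rcases hI with hIe | hIinf
  · set n := (M + 1) ^ 2 + (M + 1) - 1 with hn
    have hqn : q n = M + 1 := q_val (M + 1) (M + 1) (by omega) le_rfl
    have hnB : n ∈ B := by
      rcases hmem n with h | h
      · exact h
      · rw [hIe] at h; exact absurd h (Set.notMem_empty n)
    have := hM n hnB
    omega
  · have htend := hItend hIinf
    have hev : ∀ᶠ n in atTop ⊓ 𝓟 I, M + 2 ≤ q n := htend.eventually_ge_atTop (M + 2)
    rw [eventually_inf_principal, eventually_atTop] at hev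
    obtain ⟨N, hN⟩ := hev
    set k := max (M + 1) N with hk
    set n := k ^ 2 + (M + 1) - 1 with hn
    have hk1 : 1 ≤ k := by omega
    have hqn : q n = M + 1 := q_val (M + 1) k (by omega) (by omega)
    have hnN : N ≤ n := by
      have : k ≤ k ^ 2 := by nlinarith
      omega
    rcases hmem n with h | h
    · have := hM n h; omega
    · have := hN n hnN h; omega

theorem sqrt_tendsto : Filter.Tendsto Nat.sqrt Filter.atTop Filter.atTop := by
  apply Filter.tendsto_atTop_atTop.mpr
  intro b
  exact ⟨b ^ 2, fun n hn => Nat.le_sqrt'.mpr hn⟩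

theorem ud_empty : upperDensity ∅ = 0 := by
  unfold upperDensity
  have h : ∀ n : ℕ, ((Nat.card ↥((∅ : Set ℕ) ∩ Set.Iio n) : ℝ) / n) = 0 := by
    intro n
    simp
  simp only [h]
  exact Filter.limsup_const 0

theorem ud_univ : upperDensity Set.univ = 1 := by
  unfold upperDensity
  have hev : (fun n : ℕ => (Nat.card ↥(Set.univ ∩ Set.Iio n) : ℝ) / n) =ᶠ[Filter.atTop]
      fun _ => (1 : ℝ) := by
    filter_upwards [Filter.eventually_ge_atTop 1] with n hn
    have h1 : (Set.univ ∩ Set.Iio n : Set ℕ) = ↑(Finset.range n) := by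
      ext m; simp
    rw [h1, Nat.card_coe_set_eq, Set.ncard_coe_finset, Finset.card_range]
    have : (n : ℝ) ≠ 0 := by positivity
    field_simp
  rw [Filter.limsup_congr hev]
  exact Filter.limsup_const 1

theorem dsplit (q : ℕ → ℕ)
    (q_form : ∀ n : ℕ, 1 ≤ n → q n = n - (Nat.sqrt n) ^ 2 + 1) : HasDSplitting q := by
  classical
  set E : Set ℕ := {n | n ≠ 0 ∧ q n ≤ Nat.sqrt (Nat.sqrt n)} with hE
  have hq1 : ∀ m : ℕ, 1 ≤ m → 1 ≤ q m := by
    intro m hm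
    rw [q_form m hm]
    omega
  -- counting bound
  have hcount : ∀ n : ℕ, Nat.card ↥(E ∩ Set.Iio n) ≤
      (Nat.sqrt n + 1) * Nat.sqrt (Nat.sqrt n) := by
    intro n
    have hEq : E ∩ Set.Iio n = ↑((Finset.range n).filter (fun m => m ∈ E)) := by
      ext m
      simp only [Set.mem_inter_iff, Set.mem_Iio, Finset.coe_filter, Finset.mem_range,
        Set.mem_setOf_eq]
      tauto
    rw [hEq, Nat.card_coe_set_eq, Set.ncard_coe_finset]
    have := Finset.card_le_card_of_injOn (fun m => (Nat.sqrt m, q m - 1))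
      (s := (Finset.range n).filter (fun m => m ∈ E))
      (t := (Finset.range (Nat.sqrt n + 1)) ×ˢ (Finset.range (Nat.sqrt (Nat.sqrt n))))
      ?_ ?_
    · simpa [Finset.card_product, Finset.card_range] using this
    · intro m hm
      rw [Finset.mem_coe, Finset.mem_filter, Finset.mem_range] at hm
      obtain ⟨hmn, hm0, hms⟩ := hm
      have h1 : Nat.sqrt m ≤ Nat.sqrt n := Nat.sqrt_le_sqrt (le_of_lt hmn)
      have h2 : Nat.sqrt (Nat.sqrt m) ≤ Nat.sqrt (Nat.sqrt n) := Nat.sqrt_le_sqrt h1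
      have h3 : 1 ≤ q m := hq1 m (by omega)
      simp only [Finset.mem_coe, Finset.mem_product, Finset.mem_range]
      omega
    · intro m1 h1 m2 h2 heq
      simp only [Finset.coe_filter, Finset.mem_range, hE, Set.mem_setOf_eq] at h1 h2
      obtain ⟨h1n, h10, h1s⟩ := h1
      obtain ⟨h2n, h20, h2s⟩ := h2
      have f1 := q_form m1 (by omega : 1 ≤ m1)
      have f2 := q_form m2 (by omega : 1 ≤ m2)
      have g1 := hq1 m1 (by omega : 1 ≤ m1)
      have g2 := hq1 m2 (by omega : 1 ≤ m2)
      have s1 : (Nat.sqrt m1) ^ 2 ≤ m1 := Nat.sqrt_le' m1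
      have s2 : (Nat.sqrt m2) ^ 2 ≤ m2 := Nat.sqrt_le' m2
      have hp := Prod.ext_iff.mp heq
      simp only at hp
      obtain ⟨hpa, hpb⟩ := hp
      have hsq : (Nat.sqrt m1) ^ 2 = (Nat.sqrt m2) ^ 2 := by rw [hpa]
      omega
  -- density of E is 0
  have hdens : HasDensity E 0 := by
    apply squeeze_zero' (g := fun n : ℕ => 2 / (Nat.sqrt (Nat.sqrt n) : ℝ))
    · filter_upwards with n
      positivity
    · filter_upwards [Filter.eventually_ge_atTop 1] with n hn
      set a := Nat.sqrt n with ha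
      set s := Nat.sqrt a with hs
      have ha1 : 1 ≤ a := Nat.sqrt_pos.mpr hn
      have hs2 : s ^ 2 ≤ a := Nat.sqrt_le' a
      have ha2 : a ^ 2 ≤ n := Nat.sqrt_le' n
      have hs1 : 1 ≤ s := Nat.sqrt_pos.mpr ha1
      have hnat : Nat.card ↥(E ∩ Set.Iio n) * s ≤ 2 * n := by
        have h1 := hcount n
        have h2 : (a + 1) * s * s ≤ 2 * n := by nlinarith
        nlinarith
      rw [div_le_div_iff₀ (by positivity) (by positivity : (0:ℝ) < (s:ℝ))]
      have := (Nat.cast_le (α := ℝ)).mpr hnat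
      push_cast at this ⊢
      linarith
    · have h2 : Filter.Tendsto (fun n : ℕ => Nat.sqrt (Nat.sqrt n)) Filter.atTop Filter.atTop :=
        sqrt_tendsto.comp sqrt_tendsto
      exact (tendsto_const_div_atTop_nhds_zero_nat 2).comp h2
  -- assemble
  refine ⟨∅, Set.univ, by simp, by simp, Or.inl rfl, Or.inr (by rw [ud_univ]; norm_num), ?_, ?_⟩
  · rw [ud_empty]
    intro h
    exact absurd h (lt_irrefl 0)
  · intro _
    refine ⟨Eᶜ, ?_, ?_⟩
    · have : symmDiff Set.univ Eᶜ = E := by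
        ext m
        simp [Set.symmDiff_def]
      rwa [this]
    · have h1 : Filter.Tendsto (fun n : ℕ => Nat.sqrt (Nat.sqrt n))
          (Filter.atTop ⊓ Filter.principal Eᶜ) Filter.atTop :=
        (sqrt_tendsto.comp sqrt_tendsto).mono_left inf_le_left
      apply Filter.tendsto_atTop_mono' _ ?_ h1
      rw [Filter.EventuallyLE, Filter.eventually_inf_principal]
      filter_upwards [Filter.eventually_ge_atTop 1] with n hn hD
      rw [Set.mem_compl_iff, hE, Set.mem_setOf_eq] at hD
      push_neg at hD
      have := hD (by omega)
      omega

/-- Example: with `A i = {n : n = k² + (i-1) for some k} \ (A 1 ∪ ⋯ ∪ A (i-1))`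
and `q n = i` for `n ∈ A i`, the sequence `(q n)` has the `d`-splitting property
but not the splitting property. -/
theorem dSplitting_not_splitting_example (A : ℕ → Set ℕ)
    (hA : ∀ i, 1 ≤ i →
      A i = {n | 1 ≤ n ∧ ∃ k, 1 ≤ k ∧ n = k ^ 2 + (i - 1)} \ ⋃ j ∈ Finset.Ico 1 i, A j)
    (q : ℕ → ℕ) (hq : ∀ i, 1 ≤ i → ∀ n ∈ A i, q n = i) :
    HasDSplitting q ∧ ¬ HasSplitting q :=
  ⟨dsplit q (q_formula A hA q hq), not_split q (q_val A hA q hq)⟩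
end

section
/- Let (q_n) be a sequence of natural numbers and for each i let A_i = {n : q_n = i}. Then (q_n) has the d-splitting property if and only if there does not exist an infinite increasing sequence of indices (n_k) such that the upper natural density of A_{n_k} is positive for all k. -/
open Filter Topology Set

noncomputable def dns (A : Set ℕ) (n : ℕ) : ℝ := (Nat.card ↥(A ∩ Set.Iio n) : ℝ) / n

lemma upperDensity_eq (A : Set ℕ) : upperDensity A = Filter.limsup (dns A) Filter.atTop := rfl
lemma hasDensity_iff (A : Set ℕ) (δ : ℝ) : HasDensity A δ ↔ Filter.Tendsto (dns A) Filter.atTop (nhds δ) := Iff.rfl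

lemma dns_nonneg (A : Set ℕ) (n : ℕ) : 0 ≤ dns A n := by
  unfold dns; positivity

lemma card_inter_Iio_le (A : Set ℕ) (n : ℕ) : Nat.card ↥(A ∩ Set.Iio n) ≤ n := by
  rw [Nat.card_coe_set_eq]
  calc (A ∩ Set.Iio n).ncard ≤ (Set.Iio n).ncard :=
        Set.ncard_le_ncard inter_subset_right (Set.finite_Iio n)
    _ = n := by rw [← Nat.card_coe_set_eq, Nat.card_eq_fintype_card, Fintype.card_ofFinset (p := Set.Iio n) _ (fun _ => Finset.mem_Iio), Nat.card_Iio]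

lemma dns_le_one (A : Set ℕ) (n : ℕ) : dns A n ≤ 1 := by
  rcases Nat.eq_zero_or_pos n with h | h
  · simp [dns, h]
  · rw [dns, div_le_one (by positivity)]
    exact_mod_cast card_inter_Iio_le A n

lemma dns_mono {A B : Set ℕ} (h : A ⊆ B) (n : ℕ) : dns A n ≤ dns B n := by
  rcases Nat.eq_zero_or_pos n with h0 | h0
  · simp [dns, h0]
  · have key : Nat.card ↥(A ∩ Set.Iio n) ≤ Nat.card ↥(B ∩ Set.Iio n) := by
      rw [Nat.card_coe_set_eq, Nat.card_coe_set_eq]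
      exact Set.ncard_le_ncard (Set.inter_subset_inter_left _ h)
        ((Set.finite_Iio n).subset inter_subset_right)
    unfold dns
    exact div_le_div_of_nonneg_right (Nat.cast_le.mpr key) (by positivity) |>.trans le_rfl

lemma dns_union_le (A B : Set ℕ) (n : ℕ) : dns (A ∪ B) n ≤ dns A n + dns B n := by
  rcases Nat.eq_zero_or_pos n with h0 | h0
  · simp [dns, h0]
  · have key : Nat.card ↥((A ∪ B) ∩ Set.Iio n) ≤
        Nat.card ↥(A ∩ Set.Iio n) + Nat.card ↥(B ∩ Set.Iio n) := by
      rw [Nat.card_coe_set_eq, Nat.card_coe_set_eq, Nat.card_coe_set_eq]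
      calc ((A ∪ B) ∩ Set.Iio n).ncard = ((A ∩ Set.Iio n) ∪ (B ∩ Set.Iio n)).ncard := by
            rw [Set.union_inter_distrib_right]
        _ ≤ _ := Set.ncard_union_le _ _
    rw [dns, dns, dns, ← add_div]
    refine div_le_div_of_nonneg_right ?_ (by positivity) |>.trans le_rfl
    exact_mod_cast key

-- subset of density zero has density zero
lemma hasDensity_zero_mono {A B : Set ℕ} (h : A ⊆ B) (hB : HasDensity B 0) : HasDensity A 0 :=
  squeeze_zero (dns_nonneg A) (dns_mono h) hB

lemma hasDensity_zero_union {A B : Set ℕ} (hA : HasDensity A 0) (hB : HasDensity B 0) :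
    HasDensity (A ∪ B) 0 := by
  refine squeeze_zero (dns_nonneg _) (dns_union_le A B) ?_
  simpa using Filter.Tendsto.add ((hasDensity_iff _ _).mp hA) ((hasDensity_iff _ _).mp hB)

lemma hasDensity_zero_finite {A : Set ℕ} (h : A.Finite) : HasDensity A 0 := by
  refine squeeze_zero (f := dns A) (g := fun n => (A.ncard : ℝ) / n) (dns_nonneg _) ?_
    (tendsto_const_div_atTop_nhds_zero_nat _)
  intro n
  unfold dns
  rcases Nat.eq_zero_or_pos n with h0 | h0
  · simp [h0]
  · have key : Nat.card ↥(A ∩ Set.Iio n) ≤ A.ncard := by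
      rw [Nat.card_coe_set_eq]
      exact Set.ncard_le_ncard inter_subset_left h
    exact div_le_div_of_nonneg_right (Nat.cast_le.mpr key) (by positivity) |>.trans le_rfl

lemma upperDensity_eq_zero {A : Set ℕ} (h : HasDensity A 0) : upperDensity A = 0 :=
  Filter.Tendsto.limsup_eq h

lemma isBounded_dns (A : Set ℕ) : Filter.IsBoundedUnder (· ≤ ·) Filter.atTop (dns A) :=
  Filter.isBoundedUnder_of ⟨1, dns_le_one A⟩

lemma isCobounded_dns (A : Set ℕ) : Filter.IsCoboundedUnder (· ≤ ·) Filter.atTop (dns A) :=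
  Filter.isCoboundedUnder_le_of_le _ (dns_nonneg A)

lemma upperDensity_mono {A B : Set ℕ} (h : A ⊆ B) : upperDensity A ≤ upperDensity B := by
  rw [upperDensity_eq, upperDensity_eq]
  exact Filter.limsup_le_limsup (Filter.Eventually.of_forall (dns_mono h))
    (isCobounded_dns A) (isBounded_dns B)

lemma hasDensity_of_upperDensity_nonpos {A : Set ℕ} (h : upperDensity A ≤ 0) :
    HasDensity A 0 := by
  rw [hasDensity_iff]
  apply tendsto_of_le_liminf_of_limsup_le ?_ h ?_ ?_
  · exact Filter.le_liminf_of_le (Filter.IsBoundedUnder.isCoboundedUnder_ge (isBounded_dns A))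
      (Filter.Eventually.of_forall (dns_nonneg A))
  · exact isBounded_dns A
  · exact Filter.isBoundedUnder_of ⟨0, dns_nonneg A⟩

lemma upperDensity_pos_of_superset {A B : Set ℕ} (h : A ⊆ B) (hA : 0 < upperDensity A) :
    0 < upperDensity B := lt_of_lt_of_le hA (upperDensity_mono h)

lemma dns_le_of_inter {A B : Set ℕ} {n : ℕ} (h : A ∩ Set.Iio n ⊆ B ∩ Set.Iio n) :
    dns A n ≤ dns B n := by
  rcases Nat.eq_zero_or_pos n with h0 | h0
  · simp [dns, h0]
  · have key : Nat.card ↥(A ∩ Set.Iio n) ≤ Nat.card ↥(B ∩ Set.Iio n) := by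
      rw [Nat.card_coe_set_eq, Nat.card_coe_set_eq]
      exact Set.ncard_le_ncard h ((Set.finite_Iio n).subset inter_subset_right)
    exact div_le_div_of_nonneg_right (Nat.cast_le.mpr key) (by positivity) |>.trans le_rfl

lemma hasDensity_zero_biUnion (s : Finset ℕ) (A : ℕ → Set ℕ)
    (h : ∀ i ∈ s, HasDensity (A i) 0) : HasDensity (⋃ i ∈ s, A i) 0 := by
  classical
  induction s using Finset.induction with
  | empty => simpa using hasDensity_zero_finite Set.finite_empty
  | @insert a s ha ih =>
      rw [Finset.set_biUnion_insert]
      exact hasDensity_zero_union (h a (Finset.mem_insert_self a s))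
        (ih fun i hi => h i (Finset.mem_insert_of_mem hi))

lemma upperDensity_univ_pos : 0 < upperDensity (Set.univ : Set ℕ) := by
  have h1 : Filter.Tendsto (dns Set.univ) Filter.atTop (nhds 1) := by
    apply Filter.Tendsto.congr' ?_ tendsto_const_nhds
    filter_upwards [Filter.eventually_ge_atTop 1] with n hn
    have : (Set.univ : Set ℕ) ∩ Set.Iio n = Set.Iio n := by simp
    rw [dns, this, Nat.card_eq_fintype_card, Fintype.card_ofFinset (p := Set.Iio n) _ (fun _ => Finset.mem_Iio), Nat.card_Iio]
    rw [div_self]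
    positivity
  rw [upperDensity_eq, Filter.Tendsto.limsup_eq h1]
  norm_num


theorem aux_forward (q : ℕ → ℕ) (h : HasDSplitting q) :
    ¬ ∃ f : ℕ → ℕ, StrictMono f ∧ ∀ k, 0 < upperDensity {n | q n = f k} := by
  rintro ⟨f, hf, hpos⟩
  obtain ⟨B, D, hBD, hdisj, _, _, hBcl, hDcl⟩ := h
  -- bounded part
  obtain ⟨SB, MB, hSB0, hSBmem⟩ :
      ∃ SB MB, HasDensity SB 0 ∧ ∀ n ∈ B, MB < q n → n ∈ SB := by
    by_cases hB : 0 < upperDensity B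
    · obtain ⟨B', hB'0, M, hM⟩ := hBcl hB
      exact ⟨symmDiff B B', M, hB'0, fun n hnB hq =>
        Set.mem_symmDiff.mpr (Or.inl ⟨hnB, fun hnB' => absurd (hM n hnB') (not_le.mpr hq)⟩)⟩
    · exact ⟨B, 0, hasDensity_of_upperDensity_nonpos (not_lt.mp hB), fun n hn _ => hn⟩
  -- divergent part, per level i
  have hSD : ∀ i : ℕ, ∃ SD, HasDensity SD 0 ∧ ∀ n ∈ D, q n = i → n ∈ SD := by
    intro i
    by_cases hD : 0 < upperDensity D
    · obtain ⟨D', hD'0, htend⟩ := hDcl hD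
      have hev : ∀ᶠ n in Filter.atTop, n ∈ D' → i < q n :=
        Filter.eventually_inf_principal.mp (htend.eventually_gt_atTop i)
      obtain ⟨N, hN⟩ := Filter.eventually_atTop.mp hev
      refine ⟨symmDiff D D' ∪ Set.Iio N, hasDensity_zero_union hD'0
        (hasDensity_zero_finite (Set.finite_Iio N)), fun n hnD hq => ?_⟩
      by_cases hn' : n ∈ D'
      · by_cases hnN : N ≤ n
        · exact absurd (hN n hnN hn') (by omega)
        · exact Or.inr (by simpa using Nat.lt_of_not_le hnN)
      · exact Or.inl (Set.mem_symmDiff.mpr (Or.inl ⟨hnD, hn'⟩))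
    · exact ⟨D, hasDensity_of_upperDensity_nonpos (not_lt.mp hD), fun n hn _ => hn⟩
  set i := f (MB + 1) with hi_def
  have hiMB : MB < i := lt_of_lt_of_le (Nat.lt_succ_self MB) hf.le_apply
  obtain ⟨SD, hSD0, hSDmem⟩ := hSD i
  have hsub : {n | q n = i} ⊆ SB ∪ SD := by
    intro n hn
    have hn' : n ∈ B ∪ D := hBD ▸ Set.mem_univ n
    rcases hn' with hnB | hnD
    · exact Or.inl (hSBmem n hnB (hn ▸ hiMB))
    · exact Or.inr (hSDmem n hnD hn)
  have h0 : upperDensity {n | q n = i} ≤ 0 := by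
    rw [← upperDensity_eq_zero (hasDensity_zero_union hSB0 hSD0)]
    exact upperDensity_mono hsub
  exact absurd (hpos (MB + 1)) (not_lt.mpr h0)

theorem aux_backward (q : ℕ → ℕ)
    (hno : ¬ ∃ f : ℕ → ℕ, StrictMono f ∧ ∀ k, 0 < upperDensity {n | q n = f k}) :
    HasDSplitting q := by
  classical
  set P : Set ℕ := {i | 0 < upperDensity {n | q n = i}} with hP_def
  have hPfin : P.Finite := by
    by_contra hinf
    apply hno
    haveI : Infinite P := Set.infinite_coe_iff.mpr hinf
    refine ⟨Nat.orderEmbeddingOfSet P, (Nat.orderEmbeddingOfSet P).strictMono, fun k => ?_⟩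
    have h := Set.mem_range_self (f := ⇑(Nat.orderEmbeddingOfSet P)) k
    rw [Nat.orderEmbeddingOfSet_range] at h
    exact h
  obtain ⟨M, hM⟩ : ∃ M, ∀ i ∈ P, i ≤ M := by
    rcases hPfin.bddAbove with ⟨M, hM⟩
    exact ⟨M, fun i hi => hM hi⟩
  set B : Set ℕ := {n | q n ∈ P} with hB_def
  set D : Set ℕ := {n | q n ∉ P} with hD_def
  have fiber_zero : ∀ i ∉ P, HasDensity {n | q n = i} 0 := fun i hi =>
    hasDensity_of_upperDensity_nonpos (not_lt.mp hi)
  -- E m : members of D with small q-value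
  set E : ℕ → Set ℕ := fun m => {n | q n ∉ P ∧ q n ≤ m} with hE_def
  have hE : ∀ m, HasDensity (E m) 0 := by
    intro m
    have hsub : E m ⊆ ⋃ i ∈ Finset.range (m + 1), ({n | q n = i} ∩ {n | q n ∉ P}) := by
      rintro n ⟨h1, h2⟩
      exact Set.mem_biUnion (Finset.mem_range.mpr (Nat.lt_succ_of_le h2)) ⟨rfl, h1⟩
    refine hasDensity_zero_mono hsub (hasDensity_zero_biUnion _ _ fun i _ => ?_)
    by_cases hi : i ∈ P
    · refine hasDensity_zero_mono ?_ (hasDensity_zero_finite Set.finite_empty)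
      rintro n ⟨h1, h2⟩; exact absurd (h1 ▸ hi) h2
    · exact hasDensity_zero_mono Set.inter_subset_left (fiber_zero i hi)
  have hBbound : ∀ n ∈ B, q n ≤ M := fun n hn => hM _ hn
  have hEmono : ∀ {a b : ℕ}, a ≤ b → E a ⊆ E b := by
    rintro a b hab n ⟨h1, h2⟩; exact ⟨h1, h2.trans hab⟩
  by_cases hD : 0 < upperDensity D
  · -- main case
    refine ⟨B, D, ?_, ?_, ?_, Or.inr hD, ?_, ?_⟩
    · ext n; by_cases h : q n ∈ P <;> simp [hB_def, hD_def, h]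
    · rw [Set.disjoint_left]; intro n h1 h2; exact h2 h1
    · rcases Set.eq_empty_or_nonempty B with hB | ⟨n, hn⟩
      · exact Or.inl hB
      · refine Or.inr (lt_of_lt_of_le hn (upperDensity_mono ?_))
        intro m hm
        show q m ∈ P
        exact (hm : q m = q n) ▸ hn
    · intro _
      refine ⟨B, ?_, M, hBbound⟩
      rw [symmDiff_self]
      exact hasDensity_zero_finite (by simp [Set.finite_empty])
    · intro _
      -- choose thresholds
      have hNex : ∀ m : ℕ, ∃ N, m ≤ N ∧ ∀ n ≥ N, dns (E m) n < 1 / (m + 1) := by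
        intro m
        have h1 : (0 : ℝ) < 1 / (m + 1) := by positivity
        obtain ⟨t, ht⟩ := Filter.eventually_atTop.mp ((hE m).eventually_lt_const h1)
        exact ⟨max t m, le_max_right _ _, fun n hn => ht n ((le_max_left _ _).trans hn)⟩
      choose N hNge hNlt using hNex
      set U : Set ℕ := ⋃ m, (E m ∩ Set.Ici (N m)) with hU_def
      have hUkey : ∀ n k, k ∈ U → k < n →
          k ∈ E (Nat.findGreatest (fun j => N j ≤ n) n) := by
        intro n k hkU hkn
        obtain ⟨m, hm⟩ := Set.mem_iUnion.mp hkU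
        obtain ⟨hkE, hkN⟩ := hm
        have h1 : m ≤ n := le_trans (hNge m) (le_trans hkN hkn.le)
        have h2 : N m ≤ n := le_trans hkN hkn.le
        exact hEmono (Nat.le_findGreatest (P := fun j => N j ≤ n) h1 h2) hkE
      have hU0 : HasDensity U 0 := by
        rw [hasDensity_iff, Metric.tendsto_atTop]
        intro ε hε
        obtain ⟨m, hm⟩ := exists_nat_one_div_lt hε
        refine ⟨N m, fun n hn => ?_⟩
        rw [Real.dist_eq, sub_zero, abs_of_nonneg (dns_nonneg _ _)]
        have hmn : m ≤ n := le_trans (hNge m) hn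
        have hn' : N m ≤ n := hn
        have hFGge : m ≤ Nat.findGreatest (fun j => N j ≤ n) n :=
          Nat.le_findGreatest (P := fun j => N j ≤ n) hmn hn'
        have hFGP : N (Nat.findGreatest (fun j => N j ≤ n) n) ≤ n :=
          Nat.findGreatest_spec (P := fun j => N j ≤ n) hmn hn'
        set FG := Nat.findGreatest (fun j => N j ≤ n) n
        calc dns U n ≤ dns (E FG) n := by
              refine dns_le_of_inter ?_
              rintro k ⟨hkU, hkn⟩
              exact ⟨hUkey n k hkU hkn, hkn⟩
          _ < 1 / (FG + 1) := hNlt FG n hFGP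
          _ ≤ 1 / (m + 1) := by
              apply one_div_le_one_div_of_le (by positivity)
              exact_mod_cast Nat.succ_le_succ hFGge
          _ < ε := hm
      refine ⟨D \ U, ?_, ?_⟩
      · refine hasDensity_zero_mono ?_ hU0
        intro n hn
        rcases Set.mem_symmDiff.mp hn with ⟨h1, h2⟩ | ⟨h1, h2⟩
        · by_contra hnU; exact h2 ⟨h1, hnU⟩
        · exact absurd h1.1 h2
      · rw [Filter.tendsto_atTop]
        intro b
        rw [Filter.eventually_inf_principal]
        filter_upwards [Filter.eventually_ge_atTop (N b)] with n hn hnD'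
        by_contra hqb
        have hnE : n ∈ E b := ⟨hnD'.1, Nat.le_of_lt (Nat.lt_of_not_le hqb)⟩
        exact hnD'.2 (Set.mem_iUnion.mpr ⟨b, hnE, hn⟩)
  · -- degenerate case : D has density zero
    have hD0 : HasDensity D 0 := hasDensity_of_upperDensity_nonpos (not_lt.mp hD)
    refine ⟨Set.univ, ∅, by simp, by simp, Or.inr upperDensity_univ_pos, Or.inl rfl, ?_, ?_⟩
    · intro _
      refine ⟨B, ?_, M, hBbound⟩
      refine hasDensity_zero_mono ?_ hD0
      intro n hn
      rcases Set.mem_symmDiff.mp hn with ⟨_, h2⟩ | ⟨_, h2⟩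
      · exact h2
      · exact absurd (Set.mem_univ n) h2
    · intro h0
      exact absurd h0 (by
        rw [upperDensity_eq_zero (hasDensity_zero_finite Set.finite_empty)]
        exact lt_irrefl 0)

/-- `(q n)` has the `d`-splitting property iff there is no infinite increasing
sequence of indices `(n_k)` with `upperDensity {n : q n = n_k} > 0` for all `k`. -/
theorem hasDSplitting_iff_no_posDensity_fibers (q : ℕ → ℕ) :
    HasDSplitting q ↔
      ¬ ∃ f : ℕ → ℕ, StrictMono f ∧ ∀ k, 0 < upperDensity {n | q n = f k} := by
  exact ⟨aux_forward q, aux_backward q⟩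
end

section
/- Let (q_n) be a sequence of natural numbers and for each i let A_i = {n : q_n = i}. Then (q_n) has the splitting property if and only if there does not exist an infinite increasing sequence of indices (n_k) such that A_{n_k} is infinite for all k. -/
open Filter Topology Set

private lemma fiber_inter_finite (q : ℕ → ℕ) (I : Set ℕ)
    (h : Filter.Tendsto q (Filter.atTop ⊓ Filter.principal I) Filter.atTop) (i : ℕ) :
    ({n | q n = i} ∩ I).Finite := by
  have := (tendsto_atTop.mp h) (i + 1)
  rw [eventually_inf_principal, eventually_atTop] at this
  obtain ⟨m, hm⟩ := this
  apply (Set.finite_Iio m).subset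
  rintro n ⟨hn, hnI⟩
  by_contra hlt
  have := hm n (le_of_not_gt hlt) hnI
  simp only [mem_setOf_eq] at hn
  omega

private lemma tendsto_of_slices_finite (q : ℕ → ℕ) (I : Set ℕ)
    (hI : ∀ N, (I ∩ {n | q n < N}).Finite) :
    Filter.Tendsto q (Filter.atTop ⊓ Filter.principal I) Filter.atTop := by
  rw [tendsto_atTop]
  intro b
  rw [eventually_inf_principal]
  have hev : ∀ᶠ n in atTop, n ∉ I ∩ {n | q n < b} := by
    rw [← Nat.cofinite_eq_atTop]; exact (hI b).eventually_cofinite_notMem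
  filter_upwards [hev] with n hn hnI
  by_contra h
  exact hn ⟨hnI, lt_of_not_ge h⟩

private lemma hasSplitting_of_finite (q : ℕ → ℕ)
    (hS : {i | {n | q n = i}.Infinite}.Finite) : HasSplitting q := by
  obtain ⟨m, hm⟩ := hS.bddAbove
  set M := m + 1 with hMdef
  have key : ∀ N, {n | M ≤ q n ∧ q n < N}.Finite := by
    intro N
    have hsub : {n | M ≤ q n ∧ q n < N} ⊆ ⋃ i ∈ Set.Ico M N, {n | q n = i} := by
      rintro n ⟨h1, h2⟩
      exact Set.mem_biUnion ⟨h1, h2⟩ rfl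
    refine ((Set.finite_Ico M N).biUnion ?_).subset hsub
    intro i hi
    rw [← Set.not_infinite]
    intro hinf
    have : i ≤ m := hm hinf
    have : M ≤ i := hi.1
    omega
  set B : Set ℕ := {n | q n < M} with hBdef
  by_cases hB : B.Finite
  · -- take (∅, univ)
    refine ⟨∅, Set.univ, by simp, by simp, Or.inl rfl, Or.inr Set.infinite_univ, ?_, ?_⟩
    · intro h; exact (h Set.finite_empty).elim
    · intro _
      apply tendsto_of_slices_finite
      intro N
      have hsub : Set.univ ∩ {n | q n < N} ⊆ B ∪ {n | M ≤ q n ∧ q n < N} := by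
        rintro n ⟨-, hn⟩
        by_cases h : q n < M
        · exact Or.inl h
        · exact Or.inr ⟨le_of_not_gt h, hn⟩
      exact (hB.union (key N)).subset hsub
  · by_cases hBc : Bᶜ.Finite
    · -- take (univ, ∅)
      refine ⟨Set.univ, ∅, by simp, by simp, Or.inr Set.infinite_univ, Or.inl rfl, ?_, ?_⟩
      · intro _
        refine ⟨M + hBc.toFinset.sup q, fun n _ => ?_⟩
        by_cases h : q n < M
        · omega
        · have hn : n ∈ Bᶜ := h
          have : q n ≤ hBc.toFinset.sup q := Finset.le_sup (hBc.mem_toFinset.mpr hn)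
          omega
      · intro h; exact (h Set.finite_empty).elim
    · -- take (B, Bᶜ)
      refine ⟨B, Bᶜ, Set.union_compl_self B, disjoint_compl_right, Or.inr hB, Or.inr hBc, ?_, ?_⟩
      · intro _
        exact ⟨M, fun n hn => le_of_lt hn⟩
      · intro _
        apply tendsto_of_slices_finite
        intro N
        refine (key N).subset ?_
        rintro n ⟨hn1, hn2⟩
        exact ⟨le_of_not_gt hn1, hn2⟩

private lemma finite_of_hasSplitting (q : ℕ → ℕ) (h : HasSplitting q) :
    {i | {n | q n = i}.Infinite}.Finite := by
  obtain ⟨B, I, hunion, hdisj, hB, hI, hbd, htd⟩ := h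
  rcases hB with hB | hBinf
  · -- B = ∅, so I = univ
    have hIuniv : I = Set.univ := by
      rw [hB] at hunion; simpa using hunion
    have hIinf : I.Infinite := hIuniv ▸ Set.infinite_univ
    refine Set.finite_empty.subset ?_
    intro i hi
    have hfin := fiber_inter_finite q I (htd hIinf) i
    rw [hIuniv, Set.inter_univ] at hfin
    exact (hi hfin).elim
  · obtain ⟨M, hM⟩ := hbd hBinf
    refine (Set.finite_Iic M).subset ?_
    intro i hi
    by_contra hcon
    have hMi : M < i := lt_of_not_ge hcon
    have hsub : {n | q n = i} ⊆ I := by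
      intro n hn
      have hn' : n ∈ B ∪ I := hunion ▸ Set.mem_univ n
      rcases hn' with h' | h'
      · have := hM n h'
        simp only [mem_setOf_eq] at hn
        omega
      · exact h'
    rcases hI with hIe | hIinf
    · exact hi ((hIe ▸ hsub : {n | q n = i} ⊆ (∅ : Set ℕ)) |> Set.finite_empty.subset)
    · have hfin := fiber_inter_finite q I (htd hIinf) i
      rw [Set.inter_eq_left.mpr hsub] at hfin
      exact hi hfin

/-- `(q n)` has the splitting property iff there is no infinite increasing
sequence of indices `(n_k)` with `{n : q n = n_k}` infinite for all `k`. -/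
theorem hasSplitting_iff_no_infinite_fibers (q : ℕ → ℕ) :
    HasSplitting q ↔
      ¬ ∃ f : ℕ → ℕ, StrictMono f ∧ ∀ k, {n | q n = f k}.Infinite := by
  constructor
  · rintro h ⟨f, hf, hfib⟩
    have hS := finite_of_hasSplitting q h
    have hsub : Set.range f ⊆ {i | {n | q n = i}.Infinite} := by
      rintro i ⟨k, rfl⟩; exact hfib k
    exact Set.infinite_range_of_injective hf.injective (hS.subset hsub)
  · intro h
    apply hasSplitting_of_finite
    by_contra hS
    exact h ⟨Nat.nth (fun i => {n | q n = i}.Infinite), Nat.nth_strictMono hS,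
      fun k => Nat.nth_mem_of_infinite hS k⟩
end

section
/- Let (a_n) be an arithmetic sequence with ratios q_n and x ∈ 𝕋 with canonical representation x = Σ c_n/a_n. If supp(x) is q-divergent and lim_{n ∈ A} c_n/q_n = 0 in ℝ for some A ⊆ supp(x) with d(supp(x) \ A) = 0, then x is a topological s-torsion element of 𝕋. -/
open Filter Topology Set

/-- An arithmetic sequence: `a 0 = 1 < a 1 < a 2 < ⋯` and `a n ∣ a (n+1)`. -/
def IsArithmeticSeq (a : ℕ → ℕ) : Prop :=
  a 0 = 1 ∧ StrictMono a ∧ ∀ n, a n ∣ a (n + 1)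

/-- The ratio `q n = a n / a (n-1)` as a real number. -/
noncomputable def qr (a : ℕ → ℕ) (n : ℕ) : ℝ := (a n : ℝ) / (a (n - 1) : ℝ)

/-- `(c n)` is a canonical representation sequence w.r.t. `(a n)`:
`0 ≤ c n < q n` and `c n < q n - 1` for infinitely many `n`. -/
def IsCanonicalRep (a : ℕ → ℕ) (c : ℕ → ℕ) : Prop :=
  c 0 = 0 ∧ (∀ n, 1 ≤ n → c n < a n / a (n - 1)) ∧
    (∀ N, ∃ n, N ≤ n ∧ 1 ≤ n ∧ c n + 1 < a n / a (n - 1))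

/-- Support of (the canonical representation of) `x`. -/
def suppRep (c : ℕ → ℕ) : Set ℕ := {n | 1 ≤ n ∧ c n ≠ 0}

/-- `supp_q(x) = {n : c n = q n - 1}`. -/
def suppqRep (a c : ℕ → ℕ) : Set ℕ := {n | 1 ≤ n ∧ c n + 1 = a n / a (n - 1)}

/-- A set `S ⊆ ℕ` is `q`-bounded if `(q n)` is bounded on `S`. -/
def QBounded (a : ℕ → ℕ) (S : Set ℕ) : Prop := ∃ M, ∀ n ∈ S, a n / a (n - 1) ≤ M

/-- A set `S ⊆ ℕ` is `q`-divergent if `q n → ∞` along `n ∈ S`. -/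
def QDivergent (a : ℕ → ℕ) (S : Set ℕ) : Prop :=
  Filter.Tendsto (fun n => a n / a (n - 1)) (Filter.atTop ⊓ Filter.principal S) Filter.atTop

/-- Statistical convergence in a topological space, via neighborhoods. -/
def StatNhdTendsto {α : Type*} [TopologicalSpace α] (y : ℕ → α) (ℓ : α) : Prop :=
  ∀ U ∈ nhds ℓ, HasDensity {n | y n ∉ U} 0

lemma div_le_div_nn {x y c : ℝ} (h : x ≤ y) (hc : 0 ≤ c) : x / c ≤ y / c := by
  rw [div_eq_mul_inv, div_eq_mul_inv]
  exact mul_le_mul_of_nonneg_right h (inv_nonneg.mpr hc)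

lemma dens0_mono {B B' : Set ℕ} (h : B ⊆ B') (h' : HasDensity B' 0) : HasDensity B 0 := by
  refine squeeze_zero (fun n => by positivity) (fun n => ?_) h'
  refine div_le_div_nn ?_ (by positivity)
  have : Nat.card ↥(B ∩ Set.Iio n) ≤ Nat.card ↥(B' ∩ Set.Iio n) := by
    rw [Nat.card_coe_set_eq, Nat.card_coe_set_eq]
    exact Set.ncard_le_ncard (Set.inter_subset_inter_left _ h)
      (Set.Finite.inter_of_right (Set.finite_Iio n) B')
  exact_mod_cast this

lemma dens0_union {B B' : Set ℕ} (h : HasDensity B 0) (h' : HasDensity B' 0) :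
    HasDensity (B ∪ B') 0 := by
  have := h.add h'
  rw [add_zero] at this
  refine squeeze_zero (fun n => by positivity) (fun n => ?_) this
  rw [← add_div]
  refine div_le_div_nn ?_ (by positivity)
  have : Nat.card ↥((B ∪ B') ∩ Set.Iio n) ≤
      Nat.card ↥(B ∩ Set.Iio n) + Nat.card ↥(B' ∩ Set.Iio n) := by
    rw [Nat.card_coe_set_eq, Nat.card_coe_set_eq, Nat.card_coe_set_eq,
      Set.union_inter_distrib_right]
    exact Set.ncard_union_le _ _
  exact_mod_cast this

lemma dens0_finite {B : Set ℕ} (h : B.Finite) : HasDensity B 0 := by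
  refine squeeze_zero (fun n => by positivity) (fun n => ?_)
    (tendsto_const_div_atTop_nhds_zero_nat (B.ncard : ℝ))
  refine div_le_div_nn ?_ (by positivity)
  have : Nat.card ↥(B ∩ Set.Iio n) ≤ B.ncard := by
    rw [Nat.card_coe_set_eq]
    exact Set.ncard_le_ncard Set.inter_subset_left h
  exact_mod_cast this

lemma dens0_shift {D : Set ℕ} (j : ℕ) (h : HasDensity D 0) :
    HasDensity {n | n + j ∈ D} 0 := by
  have hlim : Tendsto (fun n : ℕ => (Nat.card ↥(D ∩ Set.Iio n) : ℝ) / n + (j : ℝ) / n)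
      atTop (nhds 0) := by
    have := h.add (tendsto_const_div_atTop_nhds_zero_nat (j : ℝ))
    rwa [add_zero] at this
  refine squeeze_zero (fun n => by positivity) (fun n => ?_) hlim
  rw [← add_div]
  refine div_le_div_nn ?_ (by positivity)
  have key : Nat.card ↥({n | n + j ∈ D} ∩ Set.Iio n) ≤ Nat.card ↥(D ∩ Set.Iio n) + j := by
    rw [Nat.card_coe_set_eq, Nat.card_coe_set_eq]
    have h1 : ({n | n + j ∈ D} ∩ Set.Iio n).ncard
        = ((· + j) '' ({n | n + j ∈ D} ∩ Set.Iio n)).ncard :=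
      (Set.ncard_image_of_injective _ (add_left_injective j)).symm
    have h2 : (· + j) '' ({n | n + j ∈ D} ∩ Set.Iio n) ⊆ (D ∩ Set.Iio n) ∪ Set.Ico n (n + j) := by
      rintro m ⟨u, ⟨hu1, hu2⟩, rfl⟩
      by_cases hc : u + j < n
      · exact Or.inl ⟨hu1, hc⟩
      · exact Or.inr ⟨Nat.le_of_not_lt hc, by simpa using hu2⟩
    have h3 : ((D ∩ Set.Iio n) ∪ Set.Ico n (n + j)).ncard
        ≤ (D ∩ Set.Iio n).ncard + (Set.Ico n (n + j)).ncard := Set.ncard_union_le _ _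
    have h4 : (Set.Ico n (n + j)).ncard = j := by
      rw [← Finset.coe_Ico, Set.ncard_coe_finset, Nat.card_Ico]
      omega
    have h5 := Set.ncard_le_ncard h2
      (((Set.finite_Iio n).inter_of_right D).union (Set.finite_Ico n (n + j)))
    omega
  exact_mod_cast key

lemma dens0_biUnion (s : Finset ℕ) (f : ℕ → Set ℕ)
    (h : ∀ j ∈ s, HasDensity (f j) 0) : HasDensity (⋃ j ∈ s, f j) 0 := by
  classical
  induction s using Finset.induction_on with
  | empty => simpa using dens0_finite Set.finite_empty
  | @insert a s hx ih =>
    rw [Finset.set_biUnion_insert]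
    exact dens0_union (h a (Finset.mem_insert_self a s))
      (ih fun j hj => h j (Finset.mem_insert_of_mem hj))

section Aux
variable {a c : ℕ → ℕ}

lemma arith_pos (ha : IsArithmeticSeq a) (n : ℕ) : 0 < a n := by
  have h0 := ha.1
  have h1 := ha.2.1.monotone (Nat.zero_le n)
  omega

lemma arith_pos' (ha : IsArithmeticSeq a) (n : ℕ) : (0 : ℝ) < (a n : ℝ) := by
  exact_mod_cast arith_pos ha n

lemma arith_dvd (ha : IsArithmeticSeq a) {k n : ℕ} (h : k ≤ n) : a k ∣ a n := by
  induction n with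
  | zero => rw [Nat.le_zero.mp h]
  | succ n ih =>
    rcases Nat.lt_or_ge k (n + 1) with h' | h'
    · exact (ih (by omega)).trans (ha.2.2 n)
    · have : k = n + 1 := by omega
      rw [this]

lemma arith_double (ha : IsArithmeticSeq a) (n : ℕ) : 2 * a n ≤ a (n + 1) := by
  obtain ⟨t, ht⟩ := ha.2.2 n
  have h1 : a n < a (n + 1) := ha.2.1 (lt_add_one n)
  have hp := arith_pos ha n
  have h2 : 2 ≤ t := by
    by_contra hlt
    push_neg at hlt
    interval_cases t <;> omega
  calc 2 * a n = a n * 2 := mul_comm _ _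
    _ ≤ a n * t := Nat.mul_le_mul le_rfl h2
    _ = a (n + 1) := ht.symm

lemma arith_grow (ha : IsArithmeticSeq a) (n k : ℕ) : a n * 2 ^ k ≤ a (n + k) := by
  induction k with
  | zero => simp
  | succ k ih =>
    have h1 := arith_double ha (n + k)
    calc a n * 2 ^ (k + 1) = a n * 2 ^ k * 2 := by ring
      _ ≤ a (n + k) * 2 := Nat.mul_le_mul ih le_rfl
      _ ≤ a (n + k + 1) := by omega

/-- The summand `c k / a k`. -/
noncomputable def gg (a c : ℕ → ℕ) (k : ℕ) : ℝ := (c k : ℝ) / (a k : ℝ)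

/-- The tail sum `∑_{k > n} c k / a k`. -/
noncomputable def Sg (a c : ℕ → ℕ) (n : ℕ) : ℝ := ∑' i, gg a c (i + (n + 1))

/-- `T n = a n * S n`, the fractional part of `a n * x`. -/
noncomputable def Tg (a c : ℕ → ℕ) (n : ℕ) : ℝ := (a n : ℝ) * Sg a c n

lemma gg_nonneg (a c : ℕ → ℕ) (k : ℕ) : 0 ≤ gg a c k :=
  div_nonneg (Nat.cast_nonneg _) (Nat.cast_nonneg _)

lemma cb_nat (ha : IsArithmeticSeq a) (hc : IsCanonicalRep a c) (m : ℕ) :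
    (c (m + 1) + 1) * a m ≤ a (m + 1) := by
  have h1 : c (m + 1) < a (m + 1) / a m := by
    have := hc.2.1 (m + 1) (by omega)
    simpa using this
  calc (c (m + 1) + 1) * a m ≤ (a (m + 1) / a m) * a m := Nat.mul_le_mul_right _ h1
    _ = a (m + 1) := Nat.div_mul_cancel (ha.2.2 m)

lemma gg_le (ha : IsArithmeticSeq a) (hc : IsCanonicalRep a c) (m : ℕ) :
    gg a c (m + 1) ≤ 1 / (a m : ℝ) - 1 / (a (m + 1) : ℝ) := by
  have hb : ((c (m + 1) : ℝ) + 1) * (a m : ℝ) ≤ (a (m + 1) : ℝ) := by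
    exact_mod_cast cb_nat ha hc m
  have hm := arith_pos' ha m
  have hm1 := arith_pos' ha (m + 1)
  rw [gg, div_sub_div _ _ hm.ne' hm1.ne', div_le_div_iff₀ hm1 (by positivity)]
  nlinarith [mul_le_mul_of_nonneg_right hb hm1.le]

lemma gg_bound (ha : IsArithmeticSeq a) (hc : IsCanonicalRep a c) (k : ℕ) :
    gg a c k ≤ 2 * (1 / 2 : ℝ) ^ k := by
  cases k with
  | zero => simp [gg, hc.1]
  | succ m =>
    have h1 : gg a c (m + 1) ≤ 1 / (a m : ℝ) := by
      have := gg_le ha hc m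
      have h2 : (0 : ℝ) ≤ 1 / (a (m + 1) : ℝ) := by positivity
      linarith
    have h2 : (2 : ℝ) ^ m ≤ (a m : ℝ) := by
      have := arith_grow ha 0 m
      rw [ha.1, one_mul, Nat.zero_add] at this
      exact_mod_cast this
    calc gg a c (m + 1) ≤ 1 / (a m : ℝ) := h1
      _ ≤ 1 / (2 : ℝ) ^ m := one_div_le_one_div_of_le (by positivity) h2
      _ = 2 * (1 / 2 : ℝ) ^ (m + 1) := by
          rw [div_pow, one_pow, pow_succ]
          field_simp
    
lemma gg_summable (ha : IsArithmeticSeq a) (hc : IsCanonicalRep a c) :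
    Summable (gg a c) :=
  Summable.of_nonneg_of_le (gg_nonneg a c) (gg_bound ha hc)
    (summable_geometric_two.mul_left 2)

lemma Sg_summable (ha : IsArithmeticSeq a) (hc : IsCanonicalRep a c) (n : ℕ) :
    Summable fun i => gg a c (i + (n + 1)) :=
  (summable_nat_add_iff (n + 1)).mpr (gg_summable ha hc)

lemma Sg_nonneg (a c : ℕ → ℕ) (n : ℕ) : 0 ≤ Sg a c n :=
  tsum_nonneg fun i => gg_nonneg a c _

lemma Tg_nonneg (a c : ℕ → ℕ) (n : ℕ) : 0 ≤ Tg a c n :=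
  mul_nonneg (Nat.cast_nonneg _) (Sg_nonneg a c n)

lemma Sg_le (ha : IsArithmeticSeq a) (hc : IsCanonicalRep a c) (n : ℕ) :
    Sg a c n ≤ 1 / (a n : ℝ) := by
  refine Summable.tsum_le_of_sum_le (Sg_summable ha hc n) ?_
  intro s
  obtain ⟨N, hN⟩ := s.exists_nat_subset_range
  have h1 : ∑ i ∈ s, gg a c (i + (n + 1)) ≤ ∑ i ∈ Finset.range N, gg a c (i + (n + 1)) :=
    Finset.sum_le_sum_of_subset_of_nonneg hN fun i _ _ => gg_nonneg a c _
  have h2 : ∑ i ∈ Finset.range N, gg a c (i + (n + 1)) ≤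
      ∑ i ∈ Finset.range N, (1 / (a (n + i) : ℝ) - 1 / (a (n + i + 1) : ℝ)) := by
    refine Finset.sum_le_sum fun i _ => ?_
    have he : i + (n + 1) = (n + i) + 1 := by omega
    rw [he]
    exact gg_le ha hc (n + i)
  have h3 : ∑ i ∈ Finset.range N, (1 / (a (n + i) : ℝ) - 1 / (a (n + i + 1) : ℝ))
      = 1 / (a n : ℝ) - 1 / (a (n + N) : ℝ) := by
    have := Finset.sum_range_sub' (fun i => 1 / (a (n + i) : ℝ)) N
    simpa [add_assoc] using this
  have h4 : (0 : ℝ) ≤ 1 / (a (n + N) : ℝ) := by positivity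
  linarith

lemma Sg_peel (ha : IsArithmeticSeq a) (hc : IsCanonicalRep a c) (n : ℕ) :
    Sg a c n = gg a c (n + 1) + Sg a c (n + 1) := by
  have h := Summable.sum_add_tsum_nat_add (f := fun i => gg a c (i + (n + 1))) 1 (Sg_summable ha hc n)
  rw [Finset.sum_range_one] at h
  have h2 : (∑' i, gg a c ((i + 1) + (n + 1))) = Sg a c (n + 1) := by
    refine tsum_congr fun i => ?_
    congr 1
    omega
  rw [h2] at h
  have h3 : gg a c (0 + (n + 1)) = gg a c (n + 1) := by norm_num
  rw [h3] at h
  exact h.symm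

lemma Sg_gap (ha : IsArithmeticSeq a) (hc : IsCanonicalRep a c) (n p : ℕ) (hnp : n ≤ p)
    (hzero : ∀ k, n < k → k ≤ p → c k = 0) : Sg a c n = Sg a c p := by
  induction p, hnp using Nat.le_induction with
  | base => rfl
  | succ p hnp ih =>
    have h1 : Sg a c n = Sg a c p := ih fun k hk1 hk2 => hzero k hk1 (by omega)
    have h2 : gg a c (p + 1) = 0 := by
      have : c (p + 1) = 0 := hzero (p + 1) (by omega) le_rfl
      simp [gg, this]
    rw [h1, Sg_peel ha hc p, h2, zero_add]

lemma Tg_master (ha : IsArithmeticSeq a) (hc : IsCanonicalRep a c) (n m : ℕ) (hnm : n < m)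
    (hzero : ∀ k, n < k → k < m → c k = 0) :
    Tg a c n ≤ ((c m : ℝ) + 1) * (a n : ℝ) / (a m : ℝ) := by
  have hgap : Sg a c n = Sg a c (m - 1) :=
    Sg_gap ha hc n (m - 1) (by omega) fun k h1 h2 => hzero k h1 (by omega)
  have hm1 : m - 1 + 1 = m := by omega
  have hpeel : Sg a c (m - 1) = gg a c m + Sg a c m := by
    have := Sg_peel ha hc (m - 1)
    rwa [hm1] at this
  have hb : Sg a c n ≤ ((c m : ℝ) + 1) / (a m : ℝ) := by
    rw [hgap, hpeel, gg, add_div]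
    have := Sg_le ha hc m
    linarith
  have han := arith_pos' ha n
  have ham := arith_pos' ha m
  calc Tg a c n = (a n : ℝ) * Sg a c n := rfl
    _ ≤ (a n : ℝ) * (((c m : ℝ) + 1) / (a m : ℝ)) := by
        exact mul_le_mul_of_nonneg_left hb han.le
    _ = ((c m : ℝ) + 1) * (a n : ℝ) / (a m : ℝ) := by ring

lemma smul_eq_Tg (ha : IsArithmeticSeq a) (hc : IsCanonicalRep a c) (n : ℕ) :
    (a n) • (((∑' k, (c k : ℝ) / (a k : ℝ)) : ℝ) : AddCircle (1 : ℝ))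
      = ((Tg a c n : ℝ) : AddCircle (1 : ℝ)) := by
  have hsum := gg_summable ha hc
  have hsplit : (∑' k, gg a c k)
      = (∑ i ∈ Finset.range (n + 1), gg a c i) + Sg a c n :=
    (Summable.sum_add_tsum_nat_add (n + 1) hsum).symm
  set Z : ℕ := ∑ i ∈ Finset.range (n + 1), c i * (a n / a i) with hZ
  have key : (a n : ℝ) * (∑ i ∈ Finset.range (n + 1), gg a c i) = (Z : ℝ) := by
    rw [hZ, Nat.cast_sum, Finset.mul_sum]
    refine Finset.sum_congr rfl fun i hi => ?_
    have hdvd : a i ∣ a n := arith_dvd ha (Nat.lt_succ_iff.mp (Finset.mem_range.mp hi))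
    have hne : (a i : ℝ) ≠ 0 := (arith_pos' ha i).ne'
    rw [Nat.cast_mul, Nat.cast_div hdvd hne, gg]
    field_simp
  have hmain : (a n : ℝ) * (∑' k, gg a c k) = (Z : ℝ) + Tg a c n := by
    rw [hsplit, mul_add, key, Tg]
  have hgg : (∑' k, (c k : ℝ) / (a k : ℝ)) = ∑' k, gg a c k := rfl
  rw [hgg, ← AddCircle.coe_nsmul, nsmul_eq_mul, hmain, AddCircle.coe_add]
  have hz : (((Z : ℝ)) : AddCircle (1 : ℝ)) = 0 := by
    rw [AddCircle.coe_eq_zero_iff]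
    exact ⟨(Z : ℤ), by simp⟩
  rw [hz, zero_add]

lemma norm_coe_le_self {t : ℝ} (ht : 0 ≤ t) : ‖((t : ℝ) : AddCircle (1 : ℝ))‖ ≤ t := by
  rw [AddCircle.norm_eq]
  simp only [inv_one, one_mul, mul_one]
  rw [abs_sub_round_eq_min]
  refine le_trans (min_le_left _ _) ?_
  have h1 : (0 : ℝ) ≤ (⌊t⌋ : ℝ) := by exact_mod_cast Int.floor_nonneg.mpr ht
  have h2 : Int.fract t = t - ⌊t⌋ := rfl
  linarith [h2.le]

end Aux

/-- If `supp(x)` is `q`-divergent and `c_n/q_n → 0` in `ℝ` along some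
`A ⊆ supp(x)` with `d(supp(x) \ A) = 0`, then `x` is a topological `s`-torsion
element of `𝕋`. -/
theorem sTorsion_of_qDivergent_cq_small (a c : ℕ → ℕ) (ha : IsArithmeticSeq a)
    (hc : IsCanonicalRep a c) (x : AddCircle (1 : ℝ))
    (hx : x = ((∑' n, (c n : ℝ) / (a n : ℝ) : ℝ) : AddCircle (1 : ℝ)))
    (hqd : QDivergent a (suppRep c))
    (A : Set ℕ) (hAsupp : A ⊆ suppRep c) (hd : HasDensity (suppRep c \ A) 0)
    (hlim : Filter.Tendsto (fun n => (c n : ℝ) / qr a n)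
      (Filter.atTop ⊓ Filter.principal A) (nhds 0)) :
    StatNhdTendsto (fun n => a n • x) (0 : AddCircle (1 : ℝ)) := by
  classical
  intro U hU
  obtain ⟨ε, hε, hball⟩ := Metric.mem_nhds_iff.mp hU
  obtain ⟨K, hK⟩ := exists_pow_lt_of_lt_one hε (by norm_num : (1/2 : ℝ) < 1)
  have hq' : Tendsto (fun m => a m / a (m - 1)) (atTop ⊓ 𝓟 A) atTop :=
    hqd.mono_left (inf_le_inf_left _ (principal_mono.mpr hAsupp))
  have hEv : ∀ᶠ m in atTop ⊓ 𝓟 A, ((c m : ℝ) + 1) / qr a m < ε := by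
    have h1 : ∀ᶠ m in atTop ⊓ 𝓟 A, (c m : ℝ) / qr a m < ε / 2 :=
      hlim.eventually_lt_const (by linarith : (0:ℝ) < ε / 2)
    have h2 : ∀ᶠ m in atTop ⊓ 𝓟 A, (⌈2/ε⌉₊ + 1) ≤ a m / a (m - 1) :=
      hq'.eventually (eventually_ge_atTop _)
    filter_upwards [h1, h2] with m hm1 hm2
    have hdv : a (m - 1) ∣ a m := arith_dvd ha (Nat.sub_le m 1)
    have hpos1 := arith_pos' ha (m - 1)
    have hqq : qr a m = ((a m / a (m - 1) : ℕ) : ℝ) := by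
      rw [qr, Nat.cast_div hdv hpos1.ne']
    have hqrpos : (0:ℝ) < qr a m := div_pos (arith_pos' ha m) hpos1
    have hqr_ge : 2 / ε ≤ qr a m := by
      rw [hqq]
      calc 2 / ε ≤ (⌈2/ε⌉₊ : ℝ) := Nat.le_ceil _
        _ ≤ ((⌈2/ε⌉₊ + 1 : ℕ) : ℝ) := by push_cast; linarith
        _ ≤ _ := by exact_mod_cast hm2
    have h1qr : 1 / qr a m ≤ ε / 2 := by
      have h2q : 2 ≤ ε * qr a m := by
        have := (div_le_iff₀ hε).mp hqr_ge
        linarith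
      rw [div_le_iff₀ hqrpos]
      nlinarith
    rw [add_div]
    linarith
  rw [eventually_inf_principal] at hEv
  obtain ⟨N, hN⟩ := eventually_atTop.mp hEv
  have hTx : ∀ n, a n • x = ((Tg a c n : ℝ) : AddCircle (1:ℝ)) := fun n => by
    rw [hx]; exact smul_eq_Tg ha hc n
  have hsubset : {n | a n • x ∉ U} ⊆
      Set.Iio N ∪ ⋃ j ∈ Finset.Icc 1 K, {n | n + j ∈ (suppRep c \ A)} := by
    intro n hn
    simp only [Set.mem_setOf_eq] at hn
    by_cases hnN : n < N
    · exact Or.inl hnN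
    · right
      push_neg at hnN
      have hTε : ε ≤ Tg a c n := by
        by_contra hlt
        push_neg at hlt
        refine hn (hball ?_)
        rw [Metric.mem_ball, hTx n, dist_zero_right]
        exact lt_of_le_of_lt (norm_coe_le_self (Tg_nonneg a c n)) hlt
      have hne : ∃ k, n < k ∧ c k ≠ 0 := by
        by_contra hno
        push_neg at hno
        have hzz : Sg a c n = 0 := by
          have hterm : ∀ i, gg a c (i + (n + 1)) = 0 := fun i => by
            simp [gg, hno (i + (n + 1)) (by omega)]
          rw [Sg, tsum_congr hterm, tsum_zero]
        have : Tg a c n = 0 := by rw [Tg, hzz, mul_zero]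
        rw [this] at hTε; linarith
      obtain ⟨m, ⟨hm1, hm2⟩, hmin0⟩ :
          ∃ m, (n < m ∧ c m ≠ 0) ∧ ∀ k, k < m → ¬(n < k ∧ c k ≠ 0) :=
        ⟨Nat.find hne, Nat.find_spec hne, fun k hk => Nat.find_min hne hk⟩
      have hmin : ∀ k, n < k → k < m → c k = 0 := by
        intro k h1 h2
        by_contra hck
        exact hmin0 k h2 ⟨h1, hck⟩
      have hmaster := Tg_master ha hc n m hm1 hmin
      have hcm1 : ((c m : ℝ) + 1) ≤ (a m : ℝ) / (a (m - 1) : ℝ) := by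
        have h1 : c m + 1 ≤ a m / a (m - 1) := hc.2.1 m (by omega)
        have hdv : a (m - 1) ∣ a m := arith_dvd ha (Nat.sub_le m 1)
        have h2 : ((c m + 1 : ℕ) : ℝ) ≤ ((a m / a (m - 1) : ℕ) : ℝ) := Nat.cast_le.mpr h1
        rwa [Nat.cast_add, Nat.cast_one,
          Nat.cast_div hdv (arith_pos' ha (m - 1)).ne'] at h2
      have han := arith_pos' ha n
      have ham := arith_pos' ha m
      have ham1 := arith_pos' ha (m - 1)
      have hb1 : Tg a c n ≤ (a n : ℝ) / (a (m - 1) : ℝ) := by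
        calc Tg a c n ≤ ((c m : ℝ) + 1) * (a n : ℝ) / (a m : ℝ) := hmaster
          _ ≤ ((a m : ℝ) / (a (m - 1) : ℝ)) * (a n : ℝ) / (a m : ℝ) :=
              div_le_div_nn (mul_le_mul_of_nonneg_right hcm1 han.le) ham.le
          _ = (a n : ℝ) / (a (m - 1) : ℝ) := by field_simp
      have hgeo : (a n : ℝ) / (a (m - 1) : ℝ) ≤ (1/2 : ℝ) ^ (m - 1 - n) := by
        have h1 : a n * 2 ^ (m - 1 - n) ≤ a (m - 1) := by
          have h := arith_grow ha n (m - 1 - n)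
          have he : n + (m - 1 - n) = m - 1 := by omega
          rwa [he] at h
        have h1' : (a n : ℝ) * 2 ^ (m - 1 - n) ≤ (a (m - 1) : ℝ) := by exact_mod_cast h1
        have h2d : (0 : ℝ) < 2 ^ (m - 1 - n) := by positivity
        rw [div_pow, one_pow, div_le_div_iff₀ ham1 h2d]
        linarith
      have hdK : m - 1 - n < K := by
        by_contra hge
        push_neg at hge
        have hmono2 : (1/2 : ℝ) ^ (m - 1 - n) ≤ (1/2 : ℝ) ^ K :=
          pow_le_pow_of_le_one (by norm_num) (by norm_num) hge
        linarith [hTε.trans (hb1.trans hgeo)]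
      have hmA : m ∉ A := by
        intro hmA
        have hineq := hN m (by omega) hmA
        have hanm1 : (a n : ℝ) ≤ (a (m - 1) : ℝ) := by
          exact_mod_cast ha.2.1.monotone (by omega : n ≤ m - 1)
        have hb2 : Tg a c n ≤ ((c m : ℝ) + 1) / qr a m := by
          rw [qr, div_div_eq_mul_div]
          calc Tg a c n ≤ ((c m : ℝ) + 1) * (a n : ℝ) / (a m : ℝ) := hmaster
            _ ≤ ((c m : ℝ) + 1) * (a (m - 1) : ℝ) / (a m : ℝ) :=
                div_le_div_nn (mul_le_mul_of_nonneg_left hanm1 (by positivity)) ham.le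
        linarith
      refine Set.mem_biUnion (show m - n ∈ Finset.Icc 1 K by rw [Finset.mem_Icc]; omega) ?_
      simp only [Set.mem_setOf_eq]
      have he : n + (m - n) = m := by omega
      rw [he]
      exact ⟨⟨by omega, hm2⟩, hmA⟩
  exact dens0_mono hsubset (dens0_union (dens0_finite (Set.finite_Iio N))
    (dens0_biUnion _ _ fun j _ => dens0_shift j hd))
end
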